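/- Let E be a Banach f-algebra with order continuous norm whose multiplication has a unit element e, and let (x_n) be a decreasing (antitone) sequence in E. Then x_n →mw 0 if and only if for every u ≥ 0 the sequence |x_n|*(u ⊓ (n:ℝ)•e) converges weakly to 0. -/

import Mathlib

open Filter Topology

/-- A net `x : ι → E` (along a filter `l`) in a Banach `f`-algebra is *multiplicative weak
convergent* (`mw`-convergent) to `a` if `|x i - a| * u` converges weakly to `0` for every
`u ≥ 0`, i.e. `f (|x i - a| * u) → 0` for every continuous linear functional `f` on `E`. -/
def MWTendsto {E : Type*} [NonUnitalNormedCommRing E] [Lattice E] [NormedSpace ℝ E]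
    {ι : Type*} (l : Filter ι) (x : ι → E) (a : E) : Prop :=
  ∀ u : E, 0 ≤ u → ∀ f : E →L[ℝ] ℝ, Tendsto (fun i => f (|x i - a| * u)) l (𝓝 0)

/-- A weakly null sequence is norm bounded (Banach–Steinhaus). -/
theorem weak_null_bounded {E : Type*} [NormedAddCommGroup E] [NormedSpace ℝ E]
    (y : ℕ → E) (hy : ∀ f : E →L[ℝ] ℝ, Tendsto (fun n => f (y n)) atTop (𝓝 0)) :
    ∃ C : ℝ, ∀ n, ‖y n‖ ≤ C := by
  obtain ⟨C, hC⟩ := banach_steinhaus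
    (g := fun n => NormedSpace.inclusionInDoubleDual ℝ E (y n)) (by
      intro f
      have h1 : Tendsto (fun n => ‖f (y n)‖) atTop (𝓝 0) := by
        simpa using (hy f).norm
      obtain ⟨C, hC⟩ := h1.bddAbove_range
      exact ⟨C, fun n => by
        simpa [NormedSpace.dual_def] using hC (Set.mem_range_self n)⟩)
  refine ⟨C, fun n => ?_⟩
  have hC0 : (0:ℝ) ≤ C := le_trans (norm_nonneg _) (hC 0)
  refine NormedSpace.norm_le_dual_bound ℝ (y n) hC0 (fun f => ?_)
  calc ‖f (y n)‖ = ‖NormedSpace.inclusionInDoubleDual ℝ E (y n) f‖ := by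
        rw [NormedSpace.dual_def]
    _ ≤ ‖NormedSpace.inclusionInDoubleDual ℝ E (y n)‖ * ‖f‖ :=
        (NormedSpace.inclusionInDoubleDual ℝ E (y n)).le_opNorm f
    _ ≤ C * ‖f‖ := by gcongr; exact hC n

/-- In an order continuous Banach `f`-algebra with multiplicative unit `e`, a decreasing
sequence `(x_n)` satisfies `x_n →mw 0` iff `|x_n| * (u ⊓ n • e)` converges weakly to `0`
for all `u ≥ 0`. -/
theorem mw_iff_truncation
    {E : Type*} [NonUnitalNormedCommRing E] [Lattice E]
    [CovariantClass E E (· + ·) (· ≤ ·)] [NormedSpace ℝ E] [CompleteSpace E]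
    (hsolid : ∀ a b : E, |a| ≤ |b| → ‖a‖ ≤ ‖b‖)
    (hmulpos : ∀ a b : E, 0 ≤ a → 0 ≤ b → 0 ≤ a * b)
    (hfalg : ∀ a b c : E, a ⊓ b = 0 → 0 ≤ c → (a * c) ⊓ b = 0)
    (hoc : ∀ {B : Type*} [Nonempty B] [SemilatticeSup B] (y : B → E),
      Antitone y → IsGLB (Set.range y) 0 → Tendsto (fun β => ‖y β‖) atTop (𝓝 0))
    (e : E) (hunit : ∀ z : E, e * z = z)
    (x : ℕ → E) (hanti : Antitone x) :
    MWTendsto atTop x (0 : E) ↔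
      ∀ u : E, 0 ≤ u → ∀ f : E →L[ℝ] ℝ,
        Tendsto (fun n : ℕ => f (|x n| * (u ⊓ (n : ℝ) • e))) atTop (𝓝 0) := by
  classical
  -- disjoint elements multiply to zero
  have hmulzero : ∀ a b : E, 0 ≤ a → a ⊓ b = 0 → a * b = 0 := by
    intro a b ha hab
    have hab' : (0:E) ≤ a * b := by
      have hb : (0:E) ≤ b := by
        have := inf_le_right (a := a) (b := b)
        -- from a ⊓ b = 0 we get 0 ≤ b
        rw [hab] at this; exact this
      exact hmulpos a b ha hb
    have h1 : (a * b) ⊓ b = 0 := hfalg a b b hab (by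
      have := inf_le_right (a := a) (b := b); rw [hab] at this; exact this)
    have h2 : (b * a) ⊓ (a * b) = 0 :=
      hfalg b (a * b) a (by rw [inf_comm]; exact h1) ha
    rw [mul_comm, inf_idem] at h2
    exact h2
  -- the unit is positive
  have he : (0:E) ≤ e := by
    have h0 : e⁺ ⊓ e⁻ = 0 := posPart_inf_negPart_eq_zero e
    have h1 : e⁺ * e⁻ = 0 := hmulzero _ _ (posPart_nonneg e) h0
    have h2 : e⁺ * e⁻ - e⁻ * e⁻ = e⁻ := by
      rw [← sub_mul, posPart_sub_negPart, hunit]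
    have h3 : e⁻ ≤ 0 := by
      rw [← h2, h1, zero_sub]
      exact neg_nonpos.mpr (hmulpos _ _ (negPart_nonneg e) (negPart_nonneg e))
    have h4 : e⁻ = 0 := le_antisymm h3 (negPart_nonneg e)
    have h5 := posPart_sub_negPart e
    rw [h4, sub_zero] at h5
    rw [← h5]; exact posPart_nonneg e
  -- the unit is a weak order unit
  have hweak : ∀ v : E, 0 ≤ v → v ⊓ e = 0 → v = 0 := by
    intro v hv hve
    have h1 : (e * v) ⊓ v = 0 := hfalg e v v (by rw [inf_comm]; exact hve) hv
    rw [hunit, inf_idem] at h1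
    exact h1
  -- difference of nat casts smul
  have hcast : ∀ (n : ℕ) (w : E), (n : ℝ) • w = n • w := fun n w =>
    Nat.cast_smul_eq_nsmul ℝ n w
  -- a ⊓ c = a - (a - c)⁺
  have hinf : ∀ a c : E, a ⊓ c = a - (a - c)⁺ := by
    intro a c
    rw [posPart_def, sub_sup, sub_sub_cancel, sub_zero, inf_comm]
  -- the truncation remainders tend to zero in norm
  have htrunc : ∀ u : E, 0 ≤ u →
      Tendsto (fun n : ℕ => ‖(u - (n : ℝ) • e)⁺‖) atTop (𝓝 0) := by
    intro u hu
    set y : ℕ → E := fun n => (u - (n : ℝ) • e)⁺ with hy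
    have hyanti : Antitone y := by
      intro n m hnm
      apply posPart_mono
      have : (0:E) ≤ (m : ℝ) • e - (n : ℝ) • e := by
        rw [hcast, hcast, ← Nat.sub_add_cancel hnm, add_nsmul, add_sub_cancel_right]
        exact nsmul_nonneg he _
      have h' := sub_nonneg.mp this
      exact sub_le_sub_left h' u
    have hglb : IsGLB (Set.range y) 0 := by
      constructor
      · rintro _ ⟨n, rfl⟩; exact posPart_nonneg _
      · intro b hb
        set v : E := b⁺ with hvdef
        have hvle : ∀ n : ℕ, v ≤ y n := by
          intro n
          have h1 : b ≤ y n := hb ⟨n, rfl⟩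
          have h2 : b⁺ ≤ (y n)⁺ := posPart_mono h1
          rwa [posPart_eq_self.mpr (posPart_nonneg _)] at h2
        have hv0 : (0:E) ≤ v := posPart_nonneg b
        set w : E := v ⊓ e with hwdef
        have hwv : w ≤ v := inf_le_left
        have hwe : w ≤ e := inf_le_right
        have hw0 : (0:E) ≤ w := le_inf hv0 he
        have hkey : ∀ k : ℕ, k • w ≤ u := by
          intro k
          induction k with
          | zero => simpa using hu
          | succ k ih =>
            have h1 : k • w ≤ u ⊓ ((k : ℝ) • e) := by
              refine le_inf ih ?_
              rw [hcast]
              exact nsmul_le_nsmul_right hwe k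
            have h2 : u ⊓ ((k : ℝ) • e) ≤ u - v := by
              rw [hinf u ((k : ℝ) • e)]
              exact sub_le_sub_left (hvle k) u
            have h3 : k • w ≤ u - w := le_trans h1 (le_trans h2
              (sub_le_sub_left hwv u))
            calc (k + 1) • w = k • w + w := succ_nsmul w k
              _ ≤ (u - w) + w := add_le_add h3 (le_refl w)
              _ = u := by abel
        have hwzero : w = 0 := by
          by_contra hne
          have hwpos : 0 < ‖w‖ := norm_pos_iff.mpr hne
          obtain ⟨k, hk⟩ := exists_nat_gt (‖u‖ / ‖w‖)
          have h1 : ‖k • w‖ ≤ ‖u‖ := by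
            apply hsolid
            rw [abs_of_nonneg (nsmul_nonneg hw0 k), abs_of_nonneg hu]
            exact hkey k
          rw [← hcast, norm_smul, Real.norm_natCast] at h1
          have := (div_lt_iff₀ hwpos).mp hk
          linarith
        have hvzero : v = 0 := hweak v hv0 (by rw [← hwdef]; exact hwzero)
        calc b ≤ b⁺ := le_posPart b
          _ = 0 := hvzero
    -- transfer to `ULift ℕ` to match the universe of `hoc`
    set y' : ULift.{_} ℕ → E := fun n => y n.down with hy'
    have hyanti' : Antitone y' := fun a b hab => hyanti hab
    have hglb' : IsGLB (Set.range y') 0 := by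
      have : Set.range y' = Set.range y := by
        ext z
        constructor
        · rintro ⟨a, rfl⟩; exact ⟨a.down, rfl⟩
        · rintro ⟨n, rfl⟩; exact ⟨ULift.up n, rfl⟩
      rwa [this]
    have hup : Tendsto (ULift.up : ℕ → ULift ℕ) atTop atTop := by
      refine Monotone.tendsto_atTop_atTop (fun a b hab => hab) (fun b => ⟨b.down, le_rfl⟩)
    have := (hoc y' hyanti' hglb').comp hup
    exact this
  -- norm of the absolute value
  have hnormabs : ∀ a : E, ‖|a|‖ = ‖a‖ := by
    intro a
    apply le_antisymm
    · apply hsolid; rw [abs_abs]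
    · apply hsolid; rw [abs_abs]
  -- key: the difference tends to zero weakly, given bounded norms
  have hkey : ∀ (u : E), 0 ≤ u → ∀ C : ℝ, (∀ n, ‖x n‖ ≤ C) →
      ∀ f : E →L[ℝ] ℝ,
      Tendsto (fun n : ℕ => f (|x n| * u) - f (|x n| * (u ⊓ (n : ℝ) • e)))
        atTop (𝓝 0) := by
    intro u hu C hC f
    have heq : ∀ n : ℕ, f (|x n| * u) - f (|x n| * (u ⊓ (n : ℝ) • e))
        = f (|x n| * (u - (n : ℝ) • e)⁺) := by
      intro n
      rw [← map_sub, ← mul_sub, hinf u ((n : ℝ) • e), sub_sub_cancel]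
    simp only [heq]
    have hb : ∀ n : ℕ, ‖f (|x n| * (u - (n : ℝ) • e)⁺)‖
        ≤ ‖f‖ * C * ‖(u - (n : ℝ) • e)⁺‖ := by
      intro n
      calc ‖f (|x n| * (u - (n : ℝ) • e)⁺)‖
          ≤ ‖f‖ * ‖|x n| * (u - (n : ℝ) • e)⁺‖ := f.le_opNorm _
        _ ≤ ‖f‖ * (‖|x n|‖ * ‖(u - (n : ℝ) • e)⁺‖) := by
            gcongr; exact norm_mul_le _ _
        _ = ‖f‖ * ‖x n‖ * ‖(u - (n : ℝ) • e)⁺‖ := by rw [hnormabs]; ring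
        _ ≤ ‖f‖ * C * ‖(u - (n : ℝ) • e)⁺‖ := by
            have h0 : ‖f‖ * ‖x n‖ ≤ ‖f‖ * C :=
              mul_le_mul_of_nonneg_left (hC n) (norm_nonneg f)
            exact mul_le_mul_of_nonneg_right h0 (norm_nonneg _)
    have hlim : Tendsto (fun n : ℕ => ‖f‖ * C * ‖(u - (n : ℝ) • e)⁺‖) atTop (𝓝 0) := by
      have := (htrunc u hu).const_mul (‖f‖ * C)
      simpa using this
    exact squeeze_zero_norm hb hlim
  constructor
  · -- forward direction
    intro h u hu f
    -- boundedness of |x n|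
    obtain ⟨C, hC⟩ := weak_null_bounded (fun n => |x n|) (by
      intro g
      have := h e he g
      simpa [mul_comm, hunit] using this)
    have hC' : ∀ n, ‖x n‖ ≤ C := fun n => by rw [← hnormabs]; exact hC n
    have h1 : Tendsto (fun n : ℕ => f (|x n| * u)) atTop (𝓝 0) := by
      simpa using h u hu f
    have h2 := hkey u hu C hC' f
    have := h1.sub h2
    simpa using this
  · -- reverse direction
    intro h u hu f
    -- boundedness of |x n|
    obtain ⟨C, hC⟩ := weak_null_bounded (fun n => |x n|) (by
      intro g
      have h1 := h e he g
      apply h1.congr'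
      filter_upwards [eventually_ge_atTop 1] with n hn
      have heq : e ⊓ (n : ℝ) • e = e := by
        apply inf_eq_left.mpr
        have hne : (0:E) ≤ (n : ℝ) • e - e := by
          rw [hcast, ← Nat.sub_add_cancel hn, add_nsmul, one_nsmul,
            add_sub_cancel_right]
          exact nsmul_nonneg he _
        exact sub_nonneg.mp hne
      rw [heq, mul_comm, hunit])
    have hC' : ∀ n, ‖x n‖ ≤ C := fun n => by rw [← hnormabs]; exact hC n
    have h1 := h u hu f
    have h2 := hkey u hu C hC' f
    have h3 := h2.add h1
    simp only [sub_zero, sub_add_cancel] at h3 ⊢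
    simpa using h3
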